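/- Let G be a connected δ-hyperbolic graph (in the four-point condition sense). Then the isometric path complexity of G is at most 4δ + 3; more precisely, for every vertex r and every isometric path P of G, every antichain (with respect to r) among the vertices of P has size at most 4δ + 3. -/

import Mathlib

open SimpleGraph

variable {V : Type*}

/-- One step of the BFS DAG `G_r`: the edge `ab` is oriented from `a` to `b`
(toward the root `r`), i.e. `d(r,b) = d(r,a) - 1`. -/
def dagStep (G : SimpleGraph V) (r a b : V) : Prop :=
  G.Adj a b ∧ G.dist r a = G.dist r b + 1

/-- Reachability by a directed path in the BFS DAG `G_r`. -/
def dagReach (G : SimpleGraph V) (r a b : V) : Prop :=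
  Relation.ReflTransGen (dagStep G r) a b

/-- A finite set of vertices is an antichain with respect to the root `r`:
its vertices are pairwise unreachable in the BFS DAG `G_r`. -/
def IsAntichainSet (G : SimpleGraph V) (r : V) (A : Finset V) : Prop :=
  ∀ a ∈ A, ∀ b ∈ A, a ≠ b → ¬ dagReach G r a b ∧ ¬ dagReach G r b a

/-- A walk is an isometric path: a shortest path between its endpoints. -/
def IsIsometricPath (G : SimpleGraph V) {u v : V} (p : G.Walk u v) : Prop :=
  p.IsPath ∧ p.length = G.dist u v

/-- The vertices of `p` can be covered by at most `k` many `r`-rooted isometric paths. -/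
def CoveredBy (G : SimpleGraph V) (r : V) {x y : V} (p : G.Walk x y) (k : ℕ) : Prop :=
  ∃ s : Finset (Σ v : V, G.Walk r v), s.card ≤ k ∧
    (∀ q ∈ s, IsIsometricPath G q.2) ∧
    ∀ a ∈ p.support, ∃ q ∈ s, a ∈ q.2.support

/-- The four-point condition: for any four vertices, the two larger of the three
distance sums differ by at most `2δ`. -/
def FourPointHyp (G : SimpleGraph V) (δ : ℝ) : Prop :=
  ∀ u v x y : V, ((G.dist u v : ℝ) + (G.dist x y : ℝ)) ≤
    max ((G.dist u x : ℝ) + (G.dist v y : ℝ)) ((G.dist u y : ℝ) + (G.dist v x : ℝ)) + 2 * δ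

/-- In a connected `δ`-hyperbolic graph, for every vertex `r` and
every isometric path `p`, every antichain (w.r.t. `r`) among the vertices of `p`
has size at most `4δ + 3`; hence the isometric path complexity is at most `4δ + 3`. -/
private lemma dagReach_of_dist {G : SimpleGraph V} (hG : G.Connected) (r : V) :
    ∀ (n : ℕ) (a b : V), G.dist a b = n → G.dist r a = G.dist r b + n → dagReach G r a b := by
  intro n
  induction n with
  | zero =>
    intro a b hab _
    have : a = b := ((hG a b).dist_eq_zero_iff).mp hab
    subst this
    exact Relation.ReflTransGen.refl
  | succ n ih =>
    intro a b hab h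
    obtain ⟨w, hw⟩ := (hG a b).exists_walk_length_eq_dist
    match w, hw with
    | SimpleGraph.Walk.nil, hw => simp at hab
    | SimpleGraph.Walk.cons hadj w', hw =>
      rename_i a'
      have hw' : w'.length = n := by
        simp only [SimpleGraph.Walk.length_cons, hab] at hw; omega
      have h1 : G.dist a' b ≤ n := hw' ▸ dist_le w'
      have htri : G.dist a b ≤ G.dist a a' + G.dist a' b := hG.dist_triangle
      have haa' : G.dist a a' ≤ 1 := dist_le (SimpleGraph.Walk.cons hadj SimpleGraph.Walk.nil)
      have h2 : G.dist a' b = n := by omega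
      have h3 : G.dist r a' ≤ G.dist r b + n :=
        le_trans hG.dist_triangle
          (by rw [show G.dist b a' = G.dist a' b from SimpleGraph.dist_comm, h2])
      have h4 : G.dist r a ≤ G.dist r a' + G.dist a' a := hG.dist_triangle
      have haa'2 : G.dist a' a ≤ 1 :=
        dist_le (SimpleGraph.Walk.cons hadj.symm SimpleGraph.Walk.nil)
      have h5 : G.dist r a' = G.dist r b + n := by omega
      exact Relation.ReflTransGen.head ⟨hadj, by omega⟩ (ih a' b h2 h5)

private lemma iso_split [DecidableEq V] {G : SimpleGraph V} (hG : G.Connected) {x y : V}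
    (p : G.Walk x y) (hp : p.length = G.dist x y) {a : V} (ha : a ∈ p.support) :
    G.dist x a = (p.takeUntil a ha).length ∧ G.dist a y = (p.dropUntil a ha).length ∧
      G.dist x a + G.dist a y = G.dist x y := by
  have hlen : (p.takeUntil a ha).length + (p.dropUntil a ha).length = p.length := by
    rw [← SimpleGraph.Walk.length_append, p.take_spec ha]
  have h1 : G.dist x a ≤ (p.takeUntil a ha).length := dist_le _
  have h2 : G.dist a y ≤ (p.dropUntil a ha).length := dist_le _
  have h3 : G.dist x y ≤ G.dist x a + G.dist a y := hG.dist_triangle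
  omega

private lemma collinear [DecidableEq V] {G : SimpleGraph V} (hG : G.Connected) {x y : V}
    (p : G.Walk x y) (hp : p.length = G.dist x y) {a b : V} (ha : a ∈ p.support)
    (hb : b ∈ p.support) :
    G.dist x a + G.dist a b = G.dist x b ∨ G.dist x b + G.dist b a = G.dist x a := by
  obtain ⟨hxa, hay, hsum⟩ := iso_split hG p hp ha
  have hb' : b ∈ (p.takeUntil a ha).support ∨ b ∈ (p.dropUntil a ha).support := by
    rw [← SimpleGraph.Walk.mem_support_append_iff, p.take_spec ha]; exact hb
  rcases hb' with hb1 | hb2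
  · right
    obtain ⟨hxb, hba, _⟩ := iso_split hG (p.takeUntil a ha) hxa.symm hb1
    omega
  · left
    obtain ⟨hab, hby, hsum2⟩ := iso_split hG (p.dropUntil a ha) hay.symm hb2
    have t1 : G.dist x b ≤ G.dist x a + G.dist a b := hG.dist_triangle
    have t2 : G.dist x y ≤ G.dist x b + G.dist b y := hG.dist_triangle
    omega

private lemma chain_le {n : ℕ} (u : Fin n → ℤ)
    (hu : ∀ j k : Fin n, j < k → u j + 1 ≤ u k) :
    ∀ (m : ℕ) (j k : Fin n), (j : ℕ) + m = (k : ℕ) → u j + m ≤ u k := by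
  intro m
  induction m with
  | zero =>
    intro j k hjk
    have : j = k := Fin.ext (by omega)
    subst this; simp
  | succ m ih =>
    intro m' k hjk
    have hk1 : (1:ℕ) ≤ (k:ℕ) := by omega
    have hklt : (k:ℕ) - 1 < n := by omega
    set k' : Fin n := ⟨(k:ℕ) - 1, hklt⟩ with hk'
    have h1 : u m' + m ≤ u k' := ih m' k' (by simp [hk']; omega)
    have h2 : u k' + 1 ≤ u k := hu k' k (by simp [Fin.lt_def, hk']; omega)
    push_cast
    linarith

theorem statement3 (G : SimpleGraph V) (hG : G.Connected) (δ : ℝ) (hδ : 0 ≤ δ)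
    (hhyp : FourPointHyp G δ) (r : V) {x y : V} (p : G.Walk x y)
    (hp : IsIsometricPath G p) (A : Finset V) (hA : ∀ a ∈ A, a ∈ p.support)
    (hanti : IsAntichainSet G r A) :
    (A.card : ℝ) ≤ 4 * δ + 3 := by
  classical
  by_contra hcon
  push_neg at hcon
  obtain ⟨hpath, hlen⟩ := hp
  set i : V → ℕ := fun a => G.dist x a with hi
  -- key pairwise facts
  have key : ∀ a ∈ A, ∀ b ∈ A, a ≠ b → i a < i b →
      G.dist a b + i a = i b ∧ G.dist r a + i a < G.dist r b + i b ∧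
        G.dist r b + i a < G.dist r a + i b := by
    intro a ha' b hb' hne hilt
    have hcol := collinear hG p hlen (hA a ha') (hA b hb')
    have hD : G.dist a b + i a = i b := by
      simp only [hi] at hilt ⊢
      omega
    obtain ⟨hnab, hnba⟩ := hanti a ha' b hb' hne
    have t1 : G.dist r a ≤ G.dist r b + G.dist b a := hG.dist_triangle
    have t2 : G.dist r b ≤ G.dist r a + G.dist a b := hG.dist_triangle
    have hcomm : G.dist b a = G.dist a b := SimpleGraph.dist_comm
    have n1 : G.dist r a ≠ G.dist r b + G.dist a b := fun h =>
      hnab (dagReach_of_dist hG r (G.dist a b) a b rfl h)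
    have n2 : G.dist r b ≠ G.dist r a + G.dist b a := fun h =>
      hnba (dagReach_of_dist hG r (G.dist b a) b a rfl h)
    omega
  -- injectivity of positions on A
  have hinj : Set.InjOn i (A : Set V) := by
    intro a ha' b hb' hiab
    by_contra hne
    have hcol := collinear hG p hlen (hA a ha') (hA b hb')
    have hd0 : G.dist a b = 0 ∨ G.dist b a = 0 := by
      simp only [hi] at hiab
      omega
    have : a = b := by
      rcases hd0 with h | h
      · exact ((hG a b).dist_eq_zero_iff).mp h
      · exact (((hG b a).dist_eq_zero_iff).mp h).symm
    exact hne this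
  -- sorted enumeration
  set n := A.card with hn
  set B : Finset ℕ := A.image i with hB
  have hBcard : B.card = n := by
    rw [hB, hn]; exact Finset.card_image_of_injOn hinj
  set e := B.orderIsoOfFin hBcard with he
  have hf : ∀ j : Fin n, ∃ a ∈ A, i a = (e j : ℕ) := by
    intro j
    have h2 : (e j : ℕ) ∈ Finset.image i A := (e j).2
    exact Finset.mem_image.mp h2
  choose f hfA hfi using hf
  have hfmono : ∀ j k : Fin n, j < k → i (f j) < i (f k) := by
    intro j k hjk
    rw [hfi j, hfi k]
    exact_mod_cast e.strictMono hjk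
  have hfne : ∀ j k : Fin n, j < k → f j ≠ f k := by
    intro j k hjk hfe
    have := hfmono j k hjk
    rw [hfe] at this
    omega
  -- u and g functions
  set u : Fin n → ℤ := fun j => (G.dist r (f j) : ℤ) + (i (f j) : ℤ) with hu
  set g : Fin n → ℤ := fun j => (i (f j) : ℤ) - (G.dist r (f j) : ℤ) with hg
  have ustep : ∀ j k : Fin n, j < k → u j + 1 ≤ u k := by
    intro j k hjk
    obtain ⟨_, h2, _⟩ := key (f j) (hfA j) (f k) (hfA k) (hfne j k hjk) (hfmono j k hjk)
    simp only [hu]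
    omega
  have gstep : ∀ j k : Fin n, j < k → g j + 1 ≤ g k := by
    intro j k hjk
    obtain ⟨_, _, h3⟩ := key (f j) (hfA j) (f k) (hfA k) (hfne j k hjk) (hfmono j k hjk)
    simp only [hg]
    omega
  -- numerics
  set t : ℕ := ⌊2 * δ⌋₊ with ht
  have ht1 : (t : ℝ) ≤ 2 * δ := Nat.floor_le (by linarith)
  have ht2 : 2 * δ < (t : ℝ) + 1 := Nat.lt_floor_add_one _
  have hnlarge : 2 * t + 4 ≤ n := by
    have : ((2 * t + 3 : ℕ) : ℝ) < (n : ℝ) := by push_cast; linarith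
    have := Nat.cast_lt.mp this
    omega
  set z : Fin n := ⟨0, by omega⟩ with hz
  set j0 : Fin n := ⟨t + 1, by omega⟩ with hj0
  set l : Fin n := ⟨n - 1, by omega⟩ with hl
  have hzj0 : z < j0 := by simp [Fin.lt_def, hz, hj0]
  have hj0l : j0 < l := by simp [Fin.lt_def, hj0, hl]; omega
  have hzl : z < l := lt_trans hzj0 hj0l
  obtain ⟨kab, _, _⟩ := key (f z) (hfA z) (f j0) (hfA j0) (hfne z j0 hzj0) (hfmono z j0 hzj0)
  obtain ⟨kbc, _, _⟩ := key (f j0) (hfA j0) (f l) (hfA l) (hfne j0 l hj0l) (hfmono j0 l hj0l)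
  obtain ⟨kac, _, _⟩ := key (f z) (hfA z) (f l) (hfA l) (hfne z l hzl) (hfmono z l hzl)
  have c1 : u z + (t + 1 : ℕ) ≤ u j0 := chain_le u ustep (t + 1) z j0 (by simp [hz, hj0])
  have c2 : g j0 + (n - t - 2 : ℕ) ≤ g l :=
    chain_le g gstep (n - t - 2) j0 l (by simp [hj0, hl]; omega)
  have hyp := hhyp r (f j0) (f z) (f l)
  have hcomm2 : G.dist (f j0) (f z) = G.dist (f z) (f j0) := SimpleGraph.dist_comm
  have hmge : (t : ℕ) + 2 ≤ n - t - 2 := by omega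
  -- real versions
  have kabR : (G.dist (f z) (f j0) : ℝ) + (i (f z) : ℝ) = (i (f j0) : ℝ) := by
    exact_mod_cast congrArg (Nat.cast : ℕ → ℝ) kab
  have kbcR : (G.dist (f j0) (f l) : ℝ) + (i (f j0) : ℝ) = (i (f l) : ℝ) := by
    exact_mod_cast congrArg (Nat.cast : ℕ → ℝ) kbc
  have kacR : (G.dist (f z) (f l) : ℝ) + (i (f z) : ℝ) = (i (f l) : ℝ) := by
    exact_mod_cast congrArg (Nat.cast : ℕ → ℝ) kac
  have c1R : (G.dist r (f z) : ℝ) + (i (f z) : ℝ) + ((t : ℝ) + 1) ≤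
      (G.dist r (f j0) : ℝ) + (i (f j0) : ℝ) := by
    have := c1
    simp only [hu] at this
    exact_mod_cast this
  have c2R : (i (f j0) : ℝ) - (G.dist r (f j0) : ℝ) + ((n - t - 2 : ℕ) : ℝ) ≤
      (i (f l) : ℝ) - (G.dist r (f l) : ℝ) := by
    have := c2
    simp only [hg] at this
    exact_mod_cast this
  have hmgeR : (t : ℝ) + 2 ≤ ((n - t - 2 : ℕ) : ℝ) := by exact_mod_cast hmge
  rcases max_cases ((G.dist r (f z) : ℝ) + (G.dist (f j0) (f l) : ℝ))
      ((G.dist r (f l) : ℝ) + (G.dist (f j0) (f z) : ℝ)) with ⟨hmax, _⟩ | ⟨hmax, _⟩ <;>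
    rw [hmax] at hyp
  · linarith
  · rw [hcomm2] at hyp
    linarith
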